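/- arXiv:1109.0609 — 8 statements merged into one kernel-verified Lean document; each statement's English description precedes it below -/
import Mathlib

section
/- Let 0 ≤ α < 1. If f(z) = z + Σ_{n≥2} a_n z^n satisfies Σ_{n≥2} n(n-1)|a_n| ≤ (1-α)/(2-α), then Σ_{n≥2} n(n-α)|a_n| ≤ 1-α, and hence |z f''(z)/f'(z)| < 1-α for all z in the unit disk. -/
open Metric Filter

lemma my_summable_pow (s : ℝ) (h0 : 0 ≤ s) (h1 : s < 1) (C : ℝ) :
    Summable fun n : ℕ => (n : ℝ) * C * s ^ (n - 1) := by
  have hgeom : Summable fun n : ℕ => (n : ℝ) * s ^ (n - 1) := by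
    rw [← summable_nat_add_iff 1]
    have h1' : ‖s‖ < 1 := by rwa [Real.norm_eq_abs, abs_of_nonneg h0]
    have := summable_pow_mul_geometric_of_norm_lt_one 1 h1'
    simp only [pow_one] at this
    have hg : Summable fun n : ℕ => s ^ n := summable_geometric_of_lt_one h0 h1
    apply (this.add hg).congr
    intro n
    push_cast [Nat.add_sub_cancel]
    ring
  have := hgeom.mul_left C
  apply this.congr
  intro n; ring

lemma my_hasDerivAt (c : ℕ → ℂ) (C : ℝ) (hC : ∀ n, ‖c n‖ ≤ C) (F : ℂ → ℂ)
    (h : ∀ z ∈ ball (0 : ℂ) 1, HasSum (fun n : ℕ => c n * z ^ n) (F z)) {z : ℂ}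
    (hz : z ∈ ball (0 : ℂ) 1) :
    HasDerivAt F (∑' n : ℕ, (n : ℂ) * c n * z ^ (n - 1)) z := by
  rw [mem_ball, dist_zero_right] at hz
  set s : ℝ := (‖z‖ + 1) / 2 with hs
  have hzs : ‖z‖ < s := by rw [hs]; linarith
  have hs0 : 0 ≤ s := by positivity
  have hs1 : s < 1 := by rw [hs]; linarith
  have hsub : ball (0 : ℂ) s ⊆ ball (0 : ℂ) 1 := ball_subset_ball (le_of_lt hs1)
  have hbound : ∀ (n : ℕ), ∀ x ∈ ball (0 : ℂ) s, ‖(n : ℂ) * c n * x ^ (n - 1)‖ ≤ (n : ℝ) * C * s ^ (n - 1) := by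
    intro n x hx
    rw [mem_ball, dist_zero_right] at hx
    rw [norm_mul, norm_mul, norm_pow, Complex.norm_natCast]
    have h1 : ‖x‖ ^ (n - 1) ≤ s ^ (n - 1) := pow_le_pow_left₀ (norm_nonneg x) hx.le _
    have h2 : (0:ℝ) ≤ ‖x‖ ^ (n-1) := by positivity
    have := hC n
    have hC0 : 0 ≤ C := le_trans (norm_nonneg _) (hC 0)
    have : ‖c n‖ * ‖x‖ ^ (n-1) ≤ C * s ^ (n-1) :=
      mul_le_mul this h1 h2 hC0
    calc (n:ℝ) * ‖c n‖ * ‖x‖ ^ (n-1) = (n:ℝ) * (‖c n‖ * ‖x‖ ^ (n-1)) := by ring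
    _ ≤ (n:ℝ) * (C * s ^ (n-1)) := by
        apply mul_le_mul_of_nonneg_left this (by positivity)
    _ = (n:ℝ) * C * s ^ (n-1) := by ring
  refine hasDerivAt_of_tendstoUniformlyOn (f := fun (t : Finset ℕ) (x : ℂ) => ∑ n ∈ t, c n * x ^ n)
    (f' := fun (t : Finset ℕ) (x : ℂ) => ∑ n ∈ t, (n : ℂ) * c n * x ^ (n - 1))
    (g' := fun x : ℂ => ∑' n : ℕ, (n : ℂ) * c n * x ^ (n - 1)) (l := (atTop : Filter (Finset ℕ))) (s := ball (0 : ℂ) s)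
    isOpen_ball ?_ ?_ ?_ ?_
  · exact tendstoUniformlyOn_tsum (my_summable_pow s hs0 hs1 C) hbound
  · filter_upwards with t x hx
    apply HasDerivAt.fun_sum
    intro n _
    have := (hasDerivAt_pow n x).const_mul (c n)
    apply this.congr_deriv
    ring
  · intro x hx
    exact h x (hsub hx)
  · rwa [mem_ball, dist_zero_right]

lemma my_summable_norm (c : ℕ → ℂ) (C : ℝ) (hC : ∀ n, ‖c n‖ ≤ C) {z : ℂ} (hz : ‖z‖ < 1) :
    Summable fun n : ℕ => ‖c n * z ^ n‖ := by
  refine Summable.of_nonneg_of_le (f := fun n : ℕ => C * ‖z‖ ^ n)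
    (fun n => norm_nonneg _) (fun n => ?_)
    ((summable_geometric_of_lt_one (norm_nonneg z) hz).mul_left C)
  rw [norm_mul, norm_pow]
  exact mul_le_mul_of_nonneg_right (hC n) (by positivity)

lemma my_shift (c : ℕ → ℂ) (C : ℝ) (hC : ∀ n, ‖c n‖ ≤ C) {z : ℂ} (hz : ‖z‖ < 1) :
    ∑' n : ℕ, (n : ℂ) * c n * z ^ (n - 1) = ∑' n : ℕ, ((n + 1 : ℕ) : ℂ) * c (n + 1) * z ^ n := by
  have hsummable : Summable fun n : ℕ => (n : ℂ) * c n * z ^ (n - 1) := by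
    apply Summable.of_norm
    refine Summable.of_nonneg_of_le (f := fun n : ℕ => (n : ℝ) * C * ‖z‖ ^ (n - 1))
      (fun n => norm_nonneg _) (fun n => ?_)
      (my_summable_pow ‖z‖ (norm_nonneg z) hz C)
    · rw [norm_mul, norm_mul, norm_pow, Complex.norm_natCast]
      have hC0 : 0 ≤ C := le_trans (norm_nonneg _) (hC 0)
      have := mul_le_mul_of_nonneg_right (hC n) (show (0:ℝ) ≤ ‖z‖ ^ (n-1) by positivity)
      calc (n:ℝ) * ‖c n‖ * ‖z‖ ^ (n-1) = (n:ℝ) * (‖c n‖ * ‖z‖ ^ (n-1)) := by ring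
      _ ≤ (n:ℝ) * (C * ‖z‖ ^ (n-1)) := mul_le_mul_of_nonneg_left this (by positivity)
      _ = (n:ℝ) * C * ‖z‖ ^ (n-1) := by ring
  rw [Summable.tsum_eq_zero_add hsummable]
  simp [Nat.add_sub_cancel]

/-- If `f(z) = z + Σ_{n≥2} a_n z^n` satisfies `Σ_{n≥2} n(n-1)|a_n| ≤ (1-α)/(2-α)`,
then `Σ_{n≥2} n(n-α)|a_n| ≤ 1-α` and `|z f''(z)/f'(z)| < 1-α` on the unit disk. -/
theorem stmt_1 (α : ℝ) (hα0 : 0 ≤ α) (hα1 : α < 1) (a : ℕ → ℂ)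
    (ha0 : a 0 = 0) (ha1 : a 1 = 1) (f : ℂ → ℂ)
    (hf : ∀ z ∈ ball (0 : ℂ) 1, HasSum (fun n : ℕ => a n * z ^ n) (f z))
    (hsum : Summable fun n : ℕ => (n : ℝ) * ((n : ℝ) - 1) * ‖a n‖)
    (h : (∑' n : ℕ, (n : ℝ) * ((n : ℝ) - 1) * ‖a n‖) ≤ (1 - α) / (2 - α)) :
    ((Summable fun n : ℕ => ((n : ℝ) + 2) * (((n : ℝ) + 2) - α) * ‖a (n + 2)‖) ∧
      (∑' n : ℕ, ((n : ℝ) + 2) * (((n : ℝ) + 2) - α) * ‖a (n + 2)‖) ≤ 1 - α) ∧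
    ∀ z ∈ ball (0 : ℂ) 1, ‖z * deriv (deriv f) z / deriv f z‖ < 1 - α := by
  -- the shifted coefficient series
  set b : ℕ → ℝ := fun n => ‖a (n + 2)‖ with hb
  have hbnn : ∀ n, 0 ≤ b n := fun n => norm_nonneg _
  have hKsum : Summable fun n : ℕ => ((n : ℝ) + 2) * ((n : ℝ) + 1) * b n := by
    apply ((summable_nat_add_iff 2).2 hsum).congr
    intro n; push_cast; ring
  have hK : (∑' n : ℕ, ((n : ℝ) + 2) * ((n : ℝ) + 1) * b n) ≤ (1 - α) / (2 - α) := by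
    have h0 := Summable.sum_add_tsum_nat_add 2 hsum
    have h1 : (∑ i ∈ Finset.range 2, (i : ℝ) * ((i : ℝ) - 1) * ‖a i‖) = 0 := by
      simp [Finset.sum_range_succ]
    have h2 : (∑' n : ℕ, ((n + 2 : ℕ) : ℝ) * (((n + 2 : ℕ) : ℝ) - 1) * ‖a (n + 2)‖)
        = ∑' n : ℕ, ((n : ℝ) + 2) * ((n : ℝ) + 1) * b n := by
      apply tsum_congr; intro n; push_cast; ring
    rw [h1, zero_add, h2] at h0
    linarith [h0 ▸ h]
  have h2α : (0:ℝ) < 2 - α := by linarith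
  have hterm : ∀ n : ℕ, ((n : ℝ) + 2) * (((n : ℝ) + 2) - α) * b n
      ≤ (2 - α) * (((n : ℝ) + 2) * ((n : ℝ) + 1) * b n) := by
    intro n
    have hn : (0:ℝ) ≤ (n : ℝ) := Nat.cast_nonneg n
    nlinarith [mul_nonneg (mul_nonneg (by linarith : (0:ℝ) ≤ (n:ℝ) + 2) (hbnn n))
      (mul_nonneg hn (by linarith : (0:ℝ) ≤ 1 - α))]
  have htnn : ∀ n : ℕ, 0 ≤ ((n : ℝ) + 2) * (((n : ℝ) + 2) - α) * b n := by
    intro n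
    have hn : (0:ℝ) ≤ (n : ℝ) := Nat.cast_nonneg n
    have : (0:ℝ) ≤ ((n : ℝ) + 2) - α := by linarith
    positivity
  have hSsum : Summable fun n : ℕ => ((n : ℝ) + 2) * (((n : ℝ) + 2) - α) * b n :=
    Summable.of_nonneg_of_le htnn hterm (hKsum.mul_left (2 - α))
  have hSle : (∑' n : ℕ, ((n : ℝ) + 2) * (((n : ℝ) + 2) - α) * b n) ≤ 1 - α := by
    calc (∑' n : ℕ, ((n : ℝ) + 2) * (((n : ℝ) + 2) - α) * b n)
        ≤ ∑' n : ℕ, (2 - α) * (((n : ℝ) + 2) * ((n : ℝ) + 1) * b n) :=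
          Summable.tsum_le_tsum hterm hSsum (hKsum.mul_left (2 - α))
      _ = (2 - α) * ∑' n : ℕ, ((n : ℝ) + 2) * ((n : ℝ) + 1) * b n := tsum_mul_left
      _ ≤ (2 - α) * ((1 - α) / (2 - α)) := mul_le_mul_of_nonneg_left hK (le_of_lt h2α)
      _ = 1 - α := by field_simp
  refine ⟨⟨hSsum, hSle⟩, ?_⟩
  -- boundedness of coefficients
  obtain ⟨D, hDt⟩ := hsum.tendsto_atTop_zero.bddAbove_range
  have hD' : ∀ n : ℕ, (n : ℝ) * ((n : ℝ) - 1) * ‖a n‖ ≤ D := fun n => hDt (Set.mem_range_self n)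
  have hD0 : (0:ℝ) ≤ D := le_trans (by simp) (hD' 0)
  have hCa : ∀ n, ‖a n‖ ≤ D + 1 := by
    intro n
    match n with
    | 0 => rw [ha0]; simp; linarith
    | 1 => rw [ha1]; simp; linarith
    | (m+2) =>
      have hh := hD' (m+2)
      push_cast at hh
      have hm : (0:ℝ) ≤ (m:ℝ) := Nat.cast_nonneg m
      nlinarith [norm_nonneg (a (m+2)),
        mul_nonneg (norm_nonneg (a (m+2))) (show (0:ℝ) ≤ (m:ℝ)*(m:ℝ)+3*(m:ℝ)+1 by positivity)]
  set c' : ℕ → ℂ := fun n => ((n + 1 : ℕ) : ℂ) * a (n + 1) with hc'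
  have hCc' : ∀ n, ‖c' n‖ ≤ D + 1 := by
    intro n
    have : ‖c' n‖ = ((n:ℝ) + 1) * ‖a (n+1)‖ := by
      simp only [hc', norm_mul, Complex.norm_natCast]; push_cast; ring
    rw [this]
    match n with
    | 0 => rw [ha1]; simp; linarith
    | (m+1) =>
      have hh := hD' (m+2)
      push_cast at hh ⊢
      have hm : (0:ℝ) ≤ (m:ℝ) := Nat.cast_nonneg m
      nlinarith [norm_nonneg (a (m+2)),
        mul_nonneg (norm_nonneg (a (m+2))) (mul_nonneg (show (0:ℝ) ≤ (m:ℝ)+2 by linarith) hm)]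
  set g1 : ℂ → ℂ := fun z => ∑' n : ℕ, (n : ℂ) * a n * z ^ (n - 1) with hg1def
  have hfd : ∀ z ∈ ball (0:ℂ) 1, HasDerivAt f (g1 z) z :=
    fun z hz => my_hasDerivAt a (D+1) hCa f hf hz
  have hderiv1 : ∀ z ∈ ball (0:ℂ) 1, deriv f z = g1 z := fun z hz => (hfd z hz).deriv
  have hg1sum : ∀ z ∈ ball (0:ℂ) 1, HasSum (fun n : ℕ => c' n * z ^ n) (g1 z) := by
    intro z hz
    rw [mem_ball, dist_zero_right] at hz
    have hs := (my_summable_norm c' (D+1) hCc' hz).of_norm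
    have hhs := hs.hasSum
    have e : g1 z = ∑' n : ℕ, c' n * z ^ n := by
      rw [hg1def]; exact my_shift a (D+1) hCa hz
    rwa [← e] at hhs
  have hg1d : ∀ z ∈ ball (0:ℂ) 1, HasDerivAt g1 (∑' n : ℕ, (n:ℂ) * c' n * z ^ (n-1)) z :=
    fun z hz => my_hasDerivAt c' (D+1) hCc' g1 hg1sum hz
  have hderiv2 : ∀ z ∈ ball (0:ℂ) 1, deriv (deriv f) z = ∑' n : ℕ, (n:ℂ) * c' n * z ^ (n-1) := by
    intro z hz
    have heq : deriv f =ᶠ[nhds z] g1 :=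
      Filter.eventuallyEq_of_mem (isOpen_ball.mem_nhds hz) (fun x hx => hderiv1 x hx)
    exact ((hg1d z hz).congr_of_eventuallyEq heq).deriv
  -- now fix z
  intro z hz
  have hz1 : ‖z‖ < 1 := by rwa [mem_ball, dist_zero_right] at hz
  set r := ‖z‖ with hrdef
  have hr0 : (0:ℝ) ≤ r := norm_nonneg z
  rw [hderiv2 z hz, hderiv1 z hz, my_shift c' (D+1) hCc' hz1]
  -- real series bounds
  have hrn1 : ∀ n : ℕ, r ^ n ≤ 1 := fun n => pow_le_one₀ hr0 hz1.le
  have hS1t : ∀ n : ℕ, ((n:ℝ)+2) * b n * r^(n+1) ≤ ((n:ℝ)+2) * ((n:ℝ)+1) * b n := by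
    intro n
    have hn : (0:ℝ) ≤ (n : ℝ) := Nat.cast_nonneg n
    have hc : (0:ℝ) ≤ ((n:ℝ)+2) * b n :=
      mul_nonneg (by linarith) (hbnn n)
    calc ((n:ℝ)+2) * b n * r^(n+1) ≤ ((n:ℝ)+2) * b n := mul_le_of_le_one_right hc (hrn1 (n+1))
      _ ≤ ((n:ℝ)+2) * ((n:ℝ)+1) * b n := by nlinarith [mul_nonneg hc hn]
  have hS2t : ∀ n : ℕ, ((n:ℝ)+2) * ((n:ℝ)+1) * b n * r^(n+1) ≤ ((n:ℝ)+2) * ((n:ℝ)+1) * b n := by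
    intro n
    have hn : (0:ℝ) ≤ (n : ℝ) := Nat.cast_nonneg n
    have hc : (0:ℝ) ≤ ((n:ℝ)+2) * ((n:ℝ)+1) * b n := by
      have := hbnn n; positivity
    exact mul_le_of_le_one_right hc (hrn1 (n+1))
  have hS1nnt : ∀ n : ℕ, (0:ℝ) ≤ ((n:ℝ)+2) * b n * r^(n+1) := by
    intro n; have := hbnn n; positivity
  have hS2nnt : ∀ n : ℕ, (0:ℝ) ≤ ((n:ℝ)+2) * ((n:ℝ)+1) * b n * r^(n+1) := by
    intro n; have := hbnn n; positivity
  have hS1sum : Summable fun n : ℕ => ((n:ℝ)+2) * b n * r^(n+1) :=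
    Summable.of_nonneg_of_le hS1nnt hS1t hKsum
  have hS2sum : Summable fun n : ℕ => ((n:ℝ)+2) * ((n:ℝ)+1) * b n * r^(n+1) :=
    Summable.of_nonneg_of_le hS2nnt hS2t hKsum
  set S1 : ℝ := ∑' n : ℕ, ((n:ℝ)+2) * b n * r^(n+1) with hS1
  set S2 : ℝ := ∑' n : ℕ, ((n:ℝ)+2) * ((n:ℝ)+1) * b n * r^(n+1) with hS2
  have hS1nn : (0:ℝ) ≤ S1 := tsum_nonneg hS1nnt
  have hS2nn : (0:ℝ) ≤ S2 := tsum_nonneg hS2nnt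
  -- main strict inequality
  have hmain : S2 + (1 - α) * S1 < 1 - α := by
    have hsum' : Summable fun n : ℕ =>
        ((n:ℝ)+2) * ((n:ℝ)+1) * b n * r^(n+1) + (1-α) * (((n:ℝ)+2) * b n * r^(n+1)) :=
      hS2sum.add (hS1sum.mul_left (1-α))
    have e1 : S2 + (1 - α) * S1 = ∑' n : ℕ,
        (((n:ℝ)+2) * ((n:ℝ)+1) * b n * r^(n+1) + (1-α) * (((n:ℝ)+2) * b n * r^(n+1))) := by
      rw [hS1, hS2, ← tsum_mul_left, ← Summable.tsum_add hS2sum (hS1sum.mul_left (1-α))]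
    have e2 : ∑' n : ℕ,
        (((n:ℝ)+2) * ((n:ℝ)+1) * b n * r^(n+1) + (1-α) * (((n:ℝ)+2) * b n * r^(n+1)))
        ≤ ∑' n : ℕ, r * ((2-α) * (((n:ℝ)+2) * ((n:ℝ)+1) * b n)) := by
      refine Summable.tsum_le_tsum (fun n => ?_) hsum' ((hKsum.mul_left (2-α)).mul_left r)
      have h1 : ((n:ℝ)+2) * (((n:ℝ)+2) - α) * b n * r^n ≤ ((n:ℝ)+2) * (((n:ℝ)+2) - α) * b n :=
        mul_le_of_le_one_right (htnn n) (hrn1 n)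
      have h2 := hterm n
      calc ((n:ℝ)+2) * ((n:ℝ)+1) * b n * r^(n+1) + (1-α) * (((n:ℝ)+2) * b n * r^(n+1))
          = (((n:ℝ)+2) * (((n:ℝ)+2) - α) * b n * r^n) * r := by rw [pow_succ]; ring
        _ ≤ (((n:ℝ)+2) * (((n:ℝ)+2) - α) * b n) * r := mul_le_mul_of_nonneg_right h1 hr0
        _ ≤ ((2-α) * (((n:ℝ)+2) * ((n:ℝ)+1) * b n)) * r := mul_le_mul_of_nonneg_right h2 hr0
        _ = r * ((2-α) * (((n:ℝ)+2) * ((n:ℝ)+1) * b n)) := by ring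
    have e3 : ∑' n : ℕ, r * ((2-α) * (((n:ℝ)+2) * ((n:ℝ)+1) * b n))
        = r * ((2-α) * ∑' n : ℕ, ((n:ℝ)+2) * ((n:ℝ)+1) * b n) := by
      rw [tsum_mul_left, tsum_mul_left]
    have e4 : (2-α) * (∑' n : ℕ, ((n:ℝ)+2) * ((n:ℝ)+1) * b n) ≤ 1 - α := by
      have := mul_le_mul_of_nonneg_left hK h2α.le
      rw [show (2-α) * ((1-α)/(2-α)) = 1 - α from by field_simp] at this
      exact this
    have e5 : r * ((2-α) * ∑' n : ℕ, ((n:ℝ)+2) * ((n:ℝ)+1) * b n) ≤ r * (1-α) :=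
      mul_le_mul_of_nonneg_left e4 hr0
    have e6 : r * (1-α) < 1 - α := by nlinarith
    linarith [e1 ▸ (e2.trans_eq e3)]
  have hS1lt : S1 < 1 := by nlinarith
  -- lower bound on the denominator
  have hnormS1 : ∀ n : ℕ, ‖c' (n+1) * z ^ (n+1)‖ = ((n:ℝ)+2) * b n * r^(n+1) := by
    intro n
    simp only [hc', norm_mul, norm_pow, Complex.norm_natCast, hb, hrdef]
    push_cast; ring
  have hsz : Summable fun n : ℕ => c' n * z ^ n := (my_summable_norm c' (D+1) hCc' hz1).of_norm
  have hg1z : g1 z = 1 + ∑' n : ℕ, c' (n+1) * z ^ (n+1) := by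
    have e := (hg1sum z hz).tsum_eq
    rw [← e, Summable.tsum_eq_zero_add hsz]
    congr 1
    simp [hc', ha1]
  have hT : ‖∑' n : ℕ, c' (n+1) * z ^ (n+1)‖ ≤ S1 := by
    calc ‖∑' n : ℕ, c' (n+1) * z ^ (n+1)‖ ≤ ∑' n : ℕ, ‖c' (n+1) * z ^ (n+1)‖ :=
          norm_tsum_le_tsum_norm (hS1sum.congr (fun n => (hnormS1 n).symm))
      _ = S1 := tsum_congr hnormS1
  have hg1lb : 1 - S1 ≤ ‖g1 z‖ := by
    rw [hg1z]
    set T := ∑' n : ℕ, c' (n+1) * z ^ (n+1) with hTdef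
    have h1 : ‖(1:ℂ)‖ ≤ ‖1 + T‖ + ‖T‖ := by
      calc ‖(1:ℂ)‖ = ‖(1 + T) - T‖ := by norm_num
        _ ≤ ‖1 + T‖ + ‖T‖ := norm_sub_le _ _
    simp only [norm_one] at h1
    linarith
  have hg1pos : (0:ℝ) < ‖g1 z‖ := lt_of_lt_of_le (by linarith) hg1lb
  -- upper bound on the numerator
  have hnormS2 : ∀ n : ℕ, ‖z * (((n+1:ℕ):ℂ) * c' (n+1) * z ^ n)‖
      = ((n:ℝ)+2) * ((n:ℝ)+1) * b n * r^(n+1) := by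
    intro n
    simp only [hc', norm_mul, norm_pow, Complex.norm_natCast, hb, hrdef]
    push_cast; ring
  have hnum : ‖z * ∑' n : ℕ, ((n+1:ℕ):ℂ) * c' (n+1) * z ^ n‖ ≤ S2 := by
    rw [← tsum_mul_left]
    calc ‖∑' n : ℕ, z * (((n+1:ℕ):ℂ) * c' (n+1) * z ^ n)‖
        ≤ ∑' n : ℕ, ‖z * (((n+1:ℕ):ℂ) * c' (n+1) * z ^ n)‖ :=
          norm_tsum_le_tsum_norm (hS2sum.congr (fun n => (hnormS2 n).symm))
      _ = S2 := tsum_congr hnormS2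
  rw [norm_div, div_lt_iff₀ hg1pos]
  have hfin : S2 < (1-α) * ‖g1 z‖ := by
    have hmul := mul_le_mul_of_nonneg_left hg1lb (show (0:ℝ) ≤ 1-α by linarith)
    nlinarith
  exact lt_of_le_of_lt hnum hfin
end

section
/- Let 0 ≤ α < 1. If f(z) = z + Σ_{n≥2} a_n z^n satisfies Σ_{n≥2} n(n-1)|a_n| ≤ 2(1-α)/(2-α), then Σ_{n≥2} (n-α)|a_n| ≤ 1-α. -/
/-- If `Σ_{n≥2} n(n-1)|a_n| ≤ 2(1-α)/(2-α)` then `Σ_{n≥2} (n-α)|a_n| ≤ 1-α`. -/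
theorem stmt_2 (α : ℝ) (hα0 : 0 ≤ α) (hα1 : α < 1) (a : ℕ → ℂ)
    (hsum : Summable fun n : ℕ => ((n : ℝ) + 2) * ((n : ℝ) + 1) * ‖a (n + 2)‖)
    (h : (∑' n : ℕ, ((n : ℝ) + 2) * ((n : ℝ) + 1) * ‖a (n + 2)‖) ≤ 2 * (1 - α) / (2 - α)) :
    (Summable fun n : ℕ => (((n : ℝ) + 2) - α) * ‖a (n + 2)‖) ∧
      (∑' n : ℕ, (((n : ℝ) + 2) - α) * ‖a (n + 2)‖) ≤ 1 - α := by
  have key : ∀ n : ℕ, (((n : ℝ) + 2) - α) * ‖a (n + 2)‖ ≤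
      (2 - α) / 2 * (((n : ℝ) + 2) * ((n : ℝ) + 1) * ‖a (n + 2)‖) := by
    intro n
    have hn : (0:ℝ) ≤ (n:ℝ) := Nat.cast_nonneg n
    have ha : (0:ℝ) ≤ ‖a (n + 2)‖ := norm_nonneg _
    nlinarith [mul_nonneg (mul_nonneg hn hn) ha, mul_nonneg hn ha]
  have hnonneg : ∀ n : ℕ, 0 ≤ (((n : ℝ) + 2) - α) * ‖a (n + 2)‖ := by
    intro n
    have hn : (0:ℝ) ≤ (n:ℝ) := Nat.cast_nonneg n
    exact mul_nonneg (by linarith) (norm_nonneg _)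
  have hS : Summable fun n : ℕ => (((n : ℝ) + 2) - α) * ‖a (n + 2)‖ :=
    Summable.of_nonneg_of_le hnonneg key (hsum.mul_left _)
  refine ⟨hS, ?_⟩
  have h1 := Summable.tsum_le_tsum key hS (hsum.mul_left _)
  rw [tsum_mul_left] at h1
  have h2α : (0:ℝ) < 2 - α := by linarith
  calc (∑' n : ℕ, (((n : ℝ) + 2) - α) * ‖a (n + 2)‖)
      ≤ (2 - α) / 2 * ∑' n : ℕ, ((n : ℝ) + 2) * ((n : ℝ) + 1) * ‖a (n + 2)‖ := h1
    _ ≤ (2 - α) / 2 * (2 * (1 - α) / (2 - α)) := by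
        apply mul_le_mul_of_nonneg_left h (by linarith)
    _ = 1 - α := by field_simp
end

section
/- Let 0 ≤ k < ∞. If f(z) = z + Σ_{n≥2} a_n z^n is analytic on the unit disk and satisfies Σ_{n≥2} n(n-1)|a_n| ≤ 1/(k+2), then k·|z f''(z)/f'(z)| < 1 + Re(z f''(z)/f'(z)) for all z in the unit disk, i.e., f is k-uniformly convex. -/
open Metric Finset

/-- If `f(z) = z + Σ_{n≥2} a_n z^n` satisfies `Σ_{n≥2} n(n-1)|a_n| ≤ 1/(k+2)` with
`k ≥ 0`, then `k|z f''(z)/f'(z)| < 1 + Re(z f''(z)/f'(z))` on the unit disk,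
i.e. `f` is `k`-uniformly convex. -/
theorem stmt_4 (k : ℝ) (hk : 0 ≤ k) (a : ℕ → ℂ) (ha0 : a 0 = 0) (ha1 : a 1 = 1)
    (f : ℂ → ℂ)
    (hf : ∀ z ∈ ball (0 : ℂ) 1, HasSum (fun n : ℕ => a n * z ^ n) (f z))
    (hsum : Summable fun n : ℕ => (n : ℝ) * ((n : ℝ) - 1) * ‖a n‖)
    (h : (∑' n : ℕ, (n : ℝ) * ((n : ℝ) - 1) * ‖a n‖) ≤ 1 / (k + 2)) :
    ∀ z ∈ ball (0 : ℂ) 1,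
      k * ‖z * deriv (deriv f) z / deriv f z‖ <
        1 + (z * deriv (deriv f) z / deriv f z).re := by
  set u2 : ℕ → ℝ := fun n => (n : ℝ) * ((n : ℝ) - 1) * ‖a n‖ with hu2def
  have hu2nn : ∀ n, 0 ≤ u2 n := by
    intro n
    rcases n with _ | n
    · simp [hu2def]
    · have h1 : u2 (n + 1) = ((n:ℝ) + 1) * (n:ℝ) * ‖a (n + 1)‖ := by
        simp only [hu2def]; push_cast; ring
      rw [h1]; positivity
  set T : ℝ := ∑' n, u2 n with hTdef
  have hTnn : 0 ≤ T := tsum_nonneg hu2nn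
  have hu1 : Summable fun n : ℕ => (n : ℝ) * ‖a n‖ := by
    refine (summable_nat_add_iff 2).mp ?_
    refine Summable.of_nonneg_of_le (fun n => by positivity)
      (fun n => ?_) ((summable_nat_add_iff 2).mpr hsum)
    simp only [hu2def]
    have : (0:ℝ) ≤ ‖a (n+2)‖ := norm_nonneg _
    push_cast
    nlinarith [mul_nonneg (mul_nonneg (by positivity : (0:ℝ) ≤ (n:ℝ)+2) (Nat.cast_nonneg (α := ℝ) n)) this]
  set c1 : ℕ → ℂ → ℂ := fun n w => (n : ℂ) * a n * w ^ (n - 1) with hc1def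
  set c2 : ℕ → ℂ → ℂ := fun n w => (n : ℂ) * ((n - 1 : ℕ) : ℂ) * a n * w ^ (n - 2) with hc2def
  have hder1 : ∀ (n : ℕ) (y : ℂ), y ∈ ball (0:ℂ) 1 →
      HasDerivAt (fun w => a n * w ^ n) (c1 n y) y := by
    intro n y _
    have := (hasDerivAt_pow n y).const_mul (a n)
    refine this.congr_deriv ?_
    simp only [hc1def]; ring
  have hbound1 : ∀ (n : ℕ) (y : ℂ), y ∈ ball (0:ℂ) 1 → ‖c1 n y‖ ≤ (n : ℝ) * ‖a n‖ := by
    intro n y hy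
    rw [mem_ball_zero_iff] at hy
    have : ‖c1 n y‖ = (n : ℝ) * ‖a n‖ * ‖y‖ ^ (n - 1) := by
      simp [hc1def, norm_mul, norm_pow]
    rw [this]
    have hp : ‖y‖ ^ (n - 1) ≤ 1 := pow_le_one₀ (norm_nonneg y) hy.le
    have h2 := mul_le_mul_of_nonneg_left hp (by positivity : (0:ℝ) ≤ (n:ℝ) * ‖a n‖)
    linarith
  have hsum0 : Summable (fun n => a n * (0:ℂ) ^ n) := by
    refine summable_of_ne_finset_zero (s := {0}) ?_
    intro n hn
    simp only [Finset.mem_singleton] at hn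
    simp [zero_pow hn]
  have hF1 : ∀ y ∈ ball (0:ℂ) 1,
      HasDerivAt (fun w => ∑' n, a n * w ^ n) (∑' n, c1 n y) y := by
    intro y hy
    exact hasDerivAt_tsum_of_isPreconnected hu1 isOpen_ball
      (convex_ball (0:ℂ) 1).isPreconnected hder1 hbound1
      (mem_ball_self one_pos) hsum0 hy
  have hderiv_f : ∀ y ∈ ball (0:ℂ) 1, deriv f y = ∑' n, c1 n y := by
    intro y hy
    have heq : f =ᶠ[nhds y] fun w => ∑' n, a n * w ^ n :=
      Filter.eventuallyEq_of_mem (isOpen_ball.mem_nhds hy) (fun w hw => (hf w hw).tsum_eq.symm)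
    rw [heq.deriv_eq, (hF1 y hy).deriv]
  -- second derivative
  have hder2 : ∀ (n : ℕ) (y : ℂ), y ∈ ball (0:ℂ) 1 → HasDerivAt (c1 n) (c2 n y) y := by
    intro n y _
    have := (hasDerivAt_pow (n - 1) y).const_mul ((n : ℂ) * a n)
    have h12 : n - 1 - 1 = n - 2 := by omega
    rw [h12] at this
    refine this.congr_deriv ?_
    simp only [hc2def]; ring
  have hbound2 : ∀ (n : ℕ) (y : ℂ), y ∈ ball (0:ℂ) 1 → ‖c2 n y‖ ≤ u2 n := by
    intro n y hy
    rw [mem_ball_zero_iff] at hy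
    rcases n with _ | n
    · simp [hc2def, hu2def]
    · have he : ‖c2 (n+1) y‖ = ((n:ℝ) + 1) * (n : ℝ) * ‖a (n+1)‖ * ‖y‖ ^ (n+1-2) := by
        simp only [hc2def, norm_mul, norm_pow, Complex.norm_natCast, Nat.add_sub_cancel]
        push_cast; ring
      have hu : u2 (n+1) = ((n:ℝ) + 1) * (n:ℝ) * ‖a (n+1)‖ := by
        simp only [hu2def]; push_cast; ring
      rw [he, hu]
      have hp : ‖y‖ ^ (n+1-2) ≤ 1 := pow_le_one₀ (norm_nonneg y) hy.le
      have h2 := mul_le_mul_of_nonneg_left hp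
        (by positivity : (0:ℝ) ≤ ((n:ℝ) + 1) * (n:ℝ) * ‖a (n+1)‖)
      linarith
  have hsum10 : Summable (fun n => c1 n (0:ℂ)) := by
    refine summable_of_ne_finset_zero (s := {0, 1}) ?_
    intro n hn
    simp only [Finset.mem_insert, Finset.mem_singleton] at hn
    push_neg at hn
    have : n - 1 ≠ 0 := by omega
    simp [hc1def, zero_pow this]
  have hF2 : ∀ y ∈ ball (0:ℂ) 1,
      HasDerivAt (fun w => ∑' n, c1 n w) (∑' n, c2 n y) y := by
    intro y hy
    exact hasDerivAt_tsum_of_isPreconnected hsum isOpen_ball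
      (convex_ball (0:ℂ) 1).isPreconnected hder2 hbound2
      (mem_ball_self one_pos) hsum10 hy
  intro z hz
  have hderiv2 : deriv (deriv f) z = ∑' n, c2 n z := by
    have heq : deriv f =ᶠ[nhds z] fun w => ∑' n, c1 n w :=
      Filter.eventuallyEq_of_mem (isOpen_ball.mem_nhds hz) hderiv_f
    rw [heq.deriv_eq, (hF2 z hz).deriv]
  rw [hderiv_f z hz, hderiv2]
  set F1 : ℂ := ∑' n, c1 n z with hF1def
  set F2 : ℂ := ∑' n, c2 n z with hF2def
  have hr : ‖z‖ < 1 := mem_ball_zero_iff.mp hz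
  -- bound on F2
  have hF2le : ‖F2‖ ≤ T := tsum_of_norm_bounded hsum.hasSum (fun n => hbound2 n z hz)
  -- T < 1
  have hk2 : (0:ℝ) < k + 2 := by linarith
  have hTk : T * (k + 2) ≤ 1 := by
    have := (le_div_iff₀ hk2).mp h
    linarith
  have hT1 : T < 1 := by nlinarith
  -- bound ‖F1 - 1‖ ≤ T
  have hsummc1 : Summable fun n => c1 n z :=
    Summable.of_norm_bounded hu1 (fun n => hbound1 n z hz)
  have hsplit : (∑ i ∈ range 2, c1 i z) + ∑' n, c1 (n + 2) z = F1 :=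
    Summable.sum_add_tsum_nat_add 2 hsummc1
  have hrange2 : (∑ i ∈ range 2, c1 i z) = 1 := by
    simp [hc1def, Finset.sum_range_succ, ha0, ha1]
  have hsplit2 : (∑ i ∈ range 2, u2 i) + ∑' n, u2 (n + 2) = T :=
    Summable.sum_add_tsum_nat_add 2 hsum
  have hrange2' : (∑ i ∈ range 2, u2 i) = 0 := by
    simp [hu2def, Finset.sum_range_succ]
  have htail : ‖∑' n, c1 (n + 2) z‖ ≤ ∑' n, u2 (n + 2) := by
    refine tsum_of_norm_bounded ((summable_nat_add_iff 2).mpr hsum).hasSum (fun n => ?_)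
    have he : ‖c1 (n + 2) z‖ = ((n:ℝ) + 2) * ‖a (n+2)‖ * ‖z‖ ^ (n + 2 - 1) := by
      simp only [hc1def, norm_mul, norm_pow, Complex.norm_natCast]
      push_cast; ring
    have hu : u2 (n+2) = ((n:ℝ) + 2) * ((n:ℝ) + 1) * ‖a (n+2)‖ := by
      simp only [hu2def]; push_cast; ring
    rw [he, hu]
    have hp : ‖z‖ ^ (n + 2 - 1) ≤ 1 := pow_le_one₀ (norm_nonneg z) hr.le
    have h2 := mul_le_mul_of_nonneg_left hp
      (by positivity : (0:ℝ) ≤ ((n:ℝ) + 2) * ‖a (n+2)‖)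
    nlinarith [mul_nonneg (mul_nonneg (by positivity : (0:ℝ) ≤ (n:ℝ)+2) (Nat.cast_nonneg (α := ℝ) n)) (norm_nonneg (a (n+2)))]
  have hF1sub : ‖F1 - 1‖ ≤ T := by
    have : F1 - 1 = ∑' n, c1 (n + 2) z := by
      rw [← hsplit, hrange2]; ring
    rw [this]
    calc ‖∑' n, c1 (n + 2) z‖ ≤ ∑' n, u2 (n + 2) := htail
      _ = T := by linarith [hsplit2, hrange2']
  have hF1ge : 1 - T ≤ ‖F1‖ := by
    have h1 : ‖(1:ℂ)‖ - ‖F1‖ ≤ ‖(1:ℂ) - F1‖ := norm_sub_norm_le _ _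
    rw [norm_sub_rev] at h1
    simp only [norm_one] at h1
    linarith
  have hF1pos : 0 < ‖F1‖ := by linarith
  -- main estimate
  set w : ℂ := z * F2 / F1 with hwdef
  rcases eq_or_lt_of_le hTnn with hT0 | hT0
  · have hF20 : F2 = 0 := by
      have : ‖F2‖ ≤ 0 := by rw [hT0]; exact hF2le
      exact norm_le_zero_iff.mp this
    have hw0 : w = 0 := by rw [hwdef, hF20]; simp
    rw [hw0]
    norm_num
  · have hwle : ‖w‖ ≤ ‖z‖ * T / (1 - T) := by
      rw [hwdef, norm_div, norm_mul]
      exact div_le_div₀ (by positivity) (by nlinarith [norm_nonneg z]) (by linarith) hF1ge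
    have hkey : k * ‖w‖ + ‖w‖ < 1 := by
      have h1 : (k + 1) * ‖w‖ ≤ (k + 1) * (‖z‖ * T / (1 - T)) := by
        apply mul_le_mul_of_nonneg_left hwle (by linarith)
      have h2 : (k + 1) * (‖z‖ * T / (1 - T)) < 1 := by
        rw [mul_div_assoc', div_lt_one (by linarith)]
        nlinarith [norm_nonneg z]
      nlinarith [norm_nonneg w]
    have hre : -‖w‖ ≤ w.re := by
      have := Complex.abs_re_le_norm w
      exact (abs_le.mp this).1
    linarith
end

section
/- Let β < 1 and α > 0, and set η₀ = (2α+β)/(2α+1). If f(z) = z + Σ_{n≥2} a_n z^n satisfies Σ_{n≥2} (αn² + (1-α)n - β)|a_n| ≤ 1-β, then Σ_{n≥2} (n - η₀)|a_n| ≤ 1 - η₀. -/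
/-- With `η₀ = (2α+β)/(2α+1)`: if `Σ_{n≥2} (αn²+(1-α)n-β)|a_n| ≤ 1-β` then
`Σ_{n≥2} (n-η₀)|a_n| ≤ 1-η₀`. -/
theorem stmt_6 (α β : ℝ) (hβ : β < 1) (hα : 0 < α) (a : ℕ → ℂ)
    (hsum : Summable fun n : ℕ =>
      (α * ((n : ℝ) + 2) ^ 2 + (1 - α) * ((n : ℝ) + 2) - β) * ‖a (n + 2)‖)
    (h : (∑' n : ℕ, (α * ((n : ℝ) + 2) ^ 2 + (1 - α) * ((n : ℝ) + 2) - β) * ‖a (n + 2)‖)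
      ≤ 1 - β) :
    (Summable fun n : ℕ =>
      (((n : ℝ) + 2) - (2 * α + β) / (2 * α + 1)) * ‖a (n + 2)‖) ∧
      (∑' n : ℕ, (((n : ℝ) + 2) - (2 * α + β) / (2 * α + 1)) * ‖a (n + 2)‖)
        ≤ 1 - (2 * α + β) / (2 * α + 1) := by
  have h1 : (0:ℝ) < 2 * α + 1 := by linarith
  have hη : (2 * α + β) / (2 * α + 1) < 1 := by
    rw [div_lt_one h1]; linarith
  have key : ∀ n : ℕ, (((n : ℝ) + 2) - (2 * α + β) / (2 * α + 1)) * ‖a (n + 2)‖ ≤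
      (α * ((n : ℝ) + 2) ^ 2 + (1 - α) * ((n : ℝ) + 2) - β) * ‖a (n + 2)‖ / (2 * α + 1) := by
    intro n
    rw [le_div_iff₀ h1]
    have hn : (0:ℝ) ≤ (n : ℝ) := Nat.cast_nonneg n
    have h2 : (2 * α + β) / (2 * α + 1) * (2 * α + 1) = 2 * α + β :=
      div_mul_cancel₀ _ (ne_of_gt h1)
    have hna : (0:ℝ) ≤ ‖a (n + 2)‖ := norm_nonneg _
    nlinarith [mul_nonneg (mul_nonneg hα.le (mul_nonneg hn hn)) hna,
      mul_nonneg (mul_nonneg hα.le hn) hna]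
  have nonneg : ∀ n : ℕ, 0 ≤ (((n : ℝ) + 2) - (2 * α + β) / (2 * α + 1)) * ‖a (n + 2)‖ := by
    intro n
    apply mul_nonneg _ (norm_nonneg _)
    have hn : (0:ℝ) ≤ (n : ℝ) := Nat.cast_nonneg n
    linarith
  have hsum2 : Summable fun n : ℕ =>
      (α * ((n : ℝ) + 2) ^ 2 + (1 - α) * ((n : ℝ) + 2) - β) * ‖a (n + 2)‖ / (2 * α + 1) :=
    hsum.div_const _
  have S : Summable fun n : ℕ =>
      (((n : ℝ) + 2) - (2 * α + β) / (2 * α + 1)) * ‖a (n + 2)‖ :=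
    Summable.of_nonneg_of_le nonneg key hsum2
  refine ⟨S, ?_⟩
  calc (∑' n : ℕ, (((n : ℝ) + 2) - (2 * α + β) / (2 * α + 1)) * ‖a (n + 2)‖)
      ≤ ∑' n : ℕ, (α * ((n : ℝ) + 2) ^ 2 + (1 - α) * ((n : ℝ) + 2) - β) * ‖a (n + 2)‖
          / (2 * α + 1) := Summable.tsum_le_tsum key S hsum2
    _ = (∑' n : ℕ, (α * ((n : ℝ) + 2) ^ 2 + (1 - α) * ((n : ℝ) + 2) - β) * ‖a (n + 2)‖)
          / (2 * α + 1) := tsum_div_const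
    _ ≤ (1 - β) / (2 * α + 1) := by
        gcongr
    _ = 1 - (2 * α + β) / (2 * α + 1) := by field_simp; ring
end

section
/- Let β < 1 and α ∈ ℝ with 2α + 2 - β > 0. If f(z) = z + Σ_{n≥2} a_n z^n satisfies Σ_{n≥2} n(n-1)|a_n| ≤ 2(1-β)/(2α+2-β), then Σ_{n≥2} (αn² + (1-α)n - β)|a_n| ≤ 1-β. -/
/-- If `Σ_{n≥2} n(n-1)|a_n| ≤ 2(1-β)/(2α+2-β)` then
`Σ_{n≥2} (αn²+(1-α)n-β)|a_n| ≤ 1-β`. -/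
theorem stmt_8 (α β : ℝ) (hβ : β < 1) (hpos : 0 < 2 * α + 2 - β) (a : ℕ → ℂ)
    (hsum : Summable fun n : ℕ => ((n : ℝ) + 2) * ((n : ℝ) + 1) * ‖a (n + 2)‖)
    (h : (∑' n : ℕ, ((n : ℝ) + 2) * ((n : ℝ) + 1) * ‖a (n + 2)‖)
      ≤ 2 * (1 - β) / (2 * α + 2 - β)) :
    (Summable fun n : ℕ =>
      (α * ((n : ℝ) + 2) ^ 2 + (1 - α) * ((n : ℝ) + 2) - β) * ‖a (n + 2)‖) ∧
      (∑' n : ℕ, (α * ((n : ℝ) + 2) ^ 2 + (1 - α) * ((n : ℝ) + 2) - β) * ‖a (n + 2)‖)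
        ≤ 1 - β := by
  set C : ℝ := 2 * |α| + |1 - α| + |β| with hC
  have hCnn : 0 ≤ C := by positivity
  have habs : ∀ n : ℕ,
      |α * ((n : ℝ) + 2) ^ 2 + (1 - α) * ((n : ℝ) + 2) - β|
        ≤ C * (((n : ℝ) + 2) * ((n : ℝ) + 1)) := by
    intro n
    have hn : (0 : ℝ) ≤ (n : ℝ) := Nat.cast_nonneg n
    have h1 : |α * ((n : ℝ) + 2) ^ 2| ≤ 2 * |α| * (((n : ℝ) + 2) * ((n : ℝ) + 1)) := by
      rw [abs_mul]
      have : |((n : ℝ) + 2) ^ 2| = ((n : ℝ) + 2) ^ 2 := abs_of_nonneg (by positivity)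
      rw [this]
      nlinarith [mul_nonneg (mul_nonneg (abs_nonneg α) hn) (by positivity : (0:ℝ) ≤ (n:ℝ) + 2)]
    have h2 : |(1 - α) * ((n : ℝ) + 2)| ≤ |1 - α| * (((n : ℝ) + 2) * ((n : ℝ) + 1)) := by
      rw [abs_mul]
      have : |((n : ℝ) + 2)| = (n : ℝ) + 2 := abs_of_nonneg (by positivity)
      rw [this]
      nlinarith [mul_nonneg (mul_nonneg (abs_nonneg (1 - α)) hn) (by positivity : (0:ℝ) ≤ (n:ℝ) + 2)]
    have h3 : |β| ≤ |β| * (((n : ℝ) + 2) * ((n : ℝ) + 1)) := by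
      nlinarith [abs_nonneg β, mul_nonneg (abs_nonneg β) hn, mul_nonneg (mul_nonneg (abs_nonneg β) hn) hn]
    calc |α * ((n : ℝ) + 2) ^ 2 + (1 - α) * ((n : ℝ) + 2) - β|
        ≤ |α * ((n : ℝ) + 2) ^ 2| + |(1 - α) * ((n : ℝ) + 2)| + |β| := by
          apply (abs_sub _ _).trans; gcongr; exact abs_add_le _ _
      _ ≤ 2 * |α| * (((n : ℝ) + 2) * ((n : ℝ) + 1)) + |1 - α| * (((n : ℝ) + 2) * ((n : ℝ) + 1))
            + |β| * (((n : ℝ) + 2) * ((n : ℝ) + 1)) := by linarith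
      _ = C * (((n : ℝ) + 2) * ((n : ℝ) + 1)) := by rw [hC]; ring
  have hS : Summable fun n : ℕ =>
      (α * ((n : ℝ) + 2) ^ 2 + (1 - α) * ((n : ℝ) + 2) - β) * ‖a (n + 2)‖ := by
    apply Summable.of_norm_bounded (hsum.mul_left C)
    intro n
    simp only [Real.norm_eq_abs, abs_mul, abs_norm]
    calc |α * ((n : ℝ) + 2) ^ 2 + (1 - α) * ((n : ℝ) + 2) - β| * ‖a (n + 2)‖
        ≤ C * (((n : ℝ) + 2) * ((n : ℝ) + 1)) * ‖a (n + 2)‖ := by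
          gcongr; exact habs n
      _ = C * (((n : ℝ) + 2) * ((n : ℝ) + 1) * ‖a (n + 2)‖) := by ring
  refine ⟨hS, ?_⟩
  have hconst : (2 * α + 2 - β) / 2 * (2 * (1 - β) / (2 * α + 2 - β)) = 1 - β := by
    rw [div_mul_div_comm, div_eq_iff (mul_ne_zero two_ne_zero hpos.ne')]
    ring
  have hterm : ∀ n : ℕ,
      (α * ((n : ℝ) + 2) ^ 2 + (1 - α) * ((n : ℝ) + 2) - β) * ‖a (n + 2)‖
        ≤ (2 * α + 2 - β) / 2 * (((n : ℝ) + 2) * ((n : ℝ) + 1) * ‖a (n + 2)‖) := by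
    intro n
    have hn : (0 : ℝ) ≤ (n : ℝ) := Nat.cast_nonneg n
    have hcoef : α * ((n : ℝ) + 2) ^ 2 + (1 - α) * ((n : ℝ) + 2) - β
        ≤ (2 * α + 2 - β) / 2 * (((n : ℝ) + 2) * ((n : ℝ) + 1)) := by
      nlinarith [mul_nonneg hn (sub_nonneg.2 hβ.le)]
    have hna : (0 : ℝ) ≤ ‖a (n + 2)‖ := norm_nonneg _
    calc (α * ((n : ℝ) + 2) ^ 2 + (1 - α) * ((n : ℝ) + 2) - β) * ‖a (n + 2)‖
        ≤ (2 * α + 2 - β) / 2 * (((n : ℝ) + 2) * ((n : ℝ) + 1)) * ‖a (n + 2)‖ :=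
          mul_le_mul_of_nonneg_right hcoef hna
      _ = (2 * α + 2 - β) / 2 * (((n : ℝ) + 2) * ((n : ℝ) + 1) * ‖a (n + 2)‖) := by ring
  calc (∑' n : ℕ, (α * ((n : ℝ) + 2) ^ 2 + (1 - α) * ((n : ℝ) + 2) - β) * ‖a (n + 2)‖)
      ≤ ∑' n : ℕ, (2 * α + 2 - β) / 2 * (((n : ℝ) + 2) * ((n : ℝ) + 1) * ‖a (n + 2)‖) :=
        Summable.tsum_le_tsum hterm hS (hsum.mul_left _)
    _ = (2 * α + 2 - β) / 2 * ∑' n : ℕ, ((n : ℝ) + 2) * ((n : ℝ) + 1) * ‖a (n + 2)‖ :=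
        tsum_mul_left
    _ ≤ (2 * α + 2 - β) / 2 * (2 * (1 - β) / (2 * α + 2 - β)) := by
        apply mul_le_mul_of_nonneg_left h (by linarith)
    _ = 1 - β := hconst
end

section
/- Let 0 ≤ β < 1 and α > 0, and let η₀ = (2α+3β-2)/(2α+β). If the nonnegative reals a_n (n ≥ 2) satisfy Σ_{n≥2} n(n-η₀) a_n ≤ 1-η₀, then Σ_{n≥2} (αn² + (1-α)n - β) a_n ≤ 1-β. -/
/-- With `η₀ = (2α+3β-2)/(2α+β)`: if `a_n ≥ 0` and `Σ_{n≥2} n(n-η₀)a_n ≤ 1-η₀` then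
`Σ_{n≥2} (αn²+(1-α)n-β)a_n ≤ 1-β`. -/
theorem stmt_14 (α β : ℝ) (hβ0 : 0 ≤ β) (hβ1 : β < 1) (hα : 0 < α) (a : ℕ → ℝ)
    (han : ∀ n, 0 ≤ a n)
    (hsum : Summable fun n : ℕ =>
      ((n : ℝ) + 2) * (((n : ℝ) + 2) - (2 * α + 3 * β - 2) / (2 * α + β)) * a (n + 2))
    (h : (∑' n : ℕ,
        ((n : ℝ) + 2) * (((n : ℝ) + 2) - (2 * α + 3 * β - 2) / (2 * α + β)) * a (n + 2))
      ≤ 1 - (2 * α + 3 * β - 2) / (2 * α + β)) :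
    (Summable fun n : ℕ =>
      (α * ((n : ℝ) + 2) ^ 2 + (1 - α) * ((n : ℝ) + 2) - β) * a (n + 2)) ∧
      (∑' n : ℕ, (α * ((n : ℝ) + 2) ^ 2 + (1 - α) * ((n : ℝ) + 2) - β) * a (n + 2))
        ≤ 1 - β := by
  have hc : (0:ℝ) < 2 * α + β := by linarith
  set c : ℝ := (2 * α + β) / 2 with hcdef
  have key : ∀ n : ℕ,
      (α * ((n : ℝ) + 2) ^ 2 + (1 - α) * ((n : ℝ) + 2) - β) * a (n + 2)
        ≤ c * (((n : ℝ) + 2) * (((n : ℝ) + 2) - (2 * α + 3 * β - 2) / (2 * α + β)) * a (n + 2)) := by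
    intro n
    have ha := han (n + 2)
    have hn : (0:ℝ) ≤ (n : ℝ) := Nat.cast_nonneg n
    have h1 : c * (((n : ℝ) + 2) * (((n : ℝ) + 2) - (2 * α + 3 * β - 2) / (2 * α + β)))
        = ((n : ℝ) + 2) * ((2 * α + β) * ((n : ℝ) + 2) - (2 * α + 3 * β - 2)) / 2 := by
      rw [hcdef]; field_simp
    have h2 : (α * ((n : ℝ) + 2) ^ 2 + (1 - α) * ((n : ℝ) + 2) - β)
        ≤ ((n : ℝ) + 2) * ((2 * α + β) * ((n : ℝ) + 2) - (2 * α + 3 * β - 2)) / 2 := by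
      nlinarith [mul_nonneg (mul_nonneg hβ0 hn) (by linarith : (0:ℝ) ≤ (n:ℝ) + 1)]
    calc (α * ((n : ℝ) + 2) ^ 2 + (1 - α) * ((n : ℝ) + 2) - β) * a (n + 2)
        ≤ (((n : ℝ) + 2) * ((2 * α + β) * ((n : ℝ) + 2) - (2 * α + 3 * β - 2)) / 2) * a (n + 2) :=
          mul_le_mul_of_nonneg_right h2 ha
      _ = c * (((n : ℝ) + 2) * (((n : ℝ) + 2) - (2 * α + 3 * β - 2) / (2 * α + β)) * a (n + 2)) := by
          rw [← mul_assoc, h1]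
  have hnonneg : ∀ n : ℕ,
      0 ≤ (α * ((n : ℝ) + 2) ^ 2 + (1 - α) * ((n : ℝ) + 2) - β) * a (n + 2) := by
    intro n
    have ha := han (n + 2)
    have hn : (0:ℝ) ≤ (n : ℝ) := Nat.cast_nonneg n
    have : 0 ≤ α * ((n : ℝ) + 2) ^ 2 + (1 - α) * ((n : ℝ) + 2) - β := by nlinarith [mul_nonneg (mul_nonneg hα.le hn) (by linarith : (0:ℝ) ≤ (n:ℝ) + 3)]
    exact mul_nonneg this ha
  have hsum' : Summable fun n : ℕ =>
      c * (((n : ℝ) + 2) * (((n : ℝ) + 2) - (2 * α + 3 * β - 2) / (2 * α + β)) * a (n + 2)) :=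
    hsum.mul_left c
  have hf : Summable fun n : ℕ =>
      (α * ((n : ℝ) + 2) ^ 2 + (1 - α) * ((n : ℝ) + 2) - β) * a (n + 2) :=
    Summable.of_nonneg_of_le hnonneg key hsum'
  refine ⟨hf, ?_⟩
  have hle := Summable.tsum_le_tsum key hf hsum'
  rw [tsum_mul_left] at hle
  have hfin : c * (1 - (2 * α + 3 * β - 2) / (2 * α + β)) = 1 - β := by
    rw [hcdef]; field_simp; ring
  calc (∑' n : ℕ, (α * ((n : ℝ) + 2) ^ 2 + (1 - α) * ((n : ℝ) + 2) - β) * a (n + 2))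
      ≤ c * (∑' n : ℕ, ((n : ℝ) + 2) * (((n : ℝ) + 2) - (2 * α + 3 * β - 2) / (2 * α + β)) * a (n + 2)) := hle
    _ ≤ c * (1 - (2 * α + 3 * β - 2) / (2 * α + β)) := by
        apply mul_le_mul_of_nonneg_left h (by positivity)
    _ = 1 - β := hfin
end

section
/- Let α ≥ 0, β ≥ 0, β < 1. If the nonnegative reals a_n (n ≥ 2) satisfy Σ_{n≥2} (αn² + (1-α)n - β) a_n ≤ 1-β, then Σ_{n≥2} n a_n ≤ 2(1-β)/(2α+2-β). -/
/-- If `a_n ≥ 0` and `Σ_{n≥2} (αn²+(1-α)n-β)a_n ≤ 1-β` then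
`Σ_{n≥2} n a_n ≤ 2(1-β)/(2α+2-β)`. -/
theorem stmt_17 (α β : ℝ) (hα : 0 ≤ α) (hβ0 : 0 ≤ β) (hβ1 : β < 1) (a : ℕ → ℝ)
    (han : ∀ n, 0 ≤ a n)
    (hsum : Summable fun n : ℕ =>
      (α * ((n : ℝ) + 2) ^ 2 + (1 - α) * ((n : ℝ) + 2) - β) * a (n + 2))
    (h : (∑' n : ℕ, (α * ((n : ℝ) + 2) ^ 2 + (1 - α) * ((n : ℝ) + 2) - β) * a (n + 2))
      ≤ 1 - β) :
    (Summable fun n : ℕ => ((n : ℝ) + 2) * a (n + 2)) ∧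
      (∑' n : ℕ, ((n : ℝ) + 2) * a (n + 2)) ≤ 2 * (1 - β) / (2 * α + 2 - β) := by
  have hpos : 0 < 2 * α + 2 - β := by linarith
  set c := 2 / (2 * α + 2 - β) with hc
  have hcpos : 0 < c := by positivity
  have hle : ∀ n : ℕ, ((n : ℝ) + 2) * a (n + 2) ≤
      c * ((α * ((n : ℝ) + 2) ^ 2 + (1 - α) * ((n : ℝ) + 2) - β) * a (n + 2)) := by
    intro n
    have hn : (0 : ℝ) ≤ (n : ℝ) := Nat.cast_nonneg n
    have h2 : ((n : ℝ) + 2) ≤ c * (α * ((n : ℝ) + 2) ^ 2 + (1 - α) * ((n : ℝ) + 2) - β) := by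
      rw [hc, div_mul_eq_mul_div, le_div_iff₀ hpos]
      nlinarith [mul_nonneg hα hn, mul_nonneg (mul_nonneg hα hn) hn, mul_nonneg hβ0 hn]
    calc ((n : ℝ) + 2) * a (n + 2)
        ≤ (c * (α * ((n : ℝ) + 2) ^ 2 + (1 - α) * ((n : ℝ) + 2) - β)) * a (n + 2) :=
          mul_le_mul_of_nonneg_right h2 (han _)
      _ = c * ((α * ((n : ℝ) + 2) ^ 2 + (1 - α) * ((n : ℝ) + 2) - β) * a (n + 2)) := by ring
  have hs2 : Summable fun n : ℕ =>
      c * ((α * ((n : ℝ) + 2) ^ 2 + (1 - α) * ((n : ℝ) + 2) - β) * a (n + 2)) :=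
    hsum.mul_left c
  have hs : Summable fun n : ℕ => ((n : ℝ) + 2) * a (n + 2) :=
    Summable.of_nonneg_of_le
      (fun n => mul_nonneg (by positivity) (han _)) hle hs2
  refine ⟨hs, ?_⟩
  have htle := Summable.tsum_le_tsum hle hs hs2
  rw [tsum_mul_left] at htle
  have h3 : c * (∑' n : ℕ,
      (α * ((n : ℝ) + 2) ^ 2 + (1 - α) * ((n : ℝ) + 2) - β) * a (n + 2)) ≤ c * (1 - β) :=
    mul_le_mul_of_nonneg_left h hcpos.le
  have heq : c * (1 - β) = 2 * (1 - β) / (2 * α + 2 - β) := by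
    rw [hc]; field_simp
  linarith
end

section
/- Let α > 0, 0 ≤ α ≤ 1, β ≥ 2(1-α), β < 1. If the nonnegative reals a_n (n ≥ 2) satisfy Σ_{n≥2} (αn² + (1-α)n - β) a_n ≤ 1-β, then Σ_{n≥2} n² a_n ≤ 4(1-β)/(2α+2-β). -/
/-- If `a_n ≥ 0` and `Σ_{n≥2} (αn²+(1-α)n-β)a_n ≤ 1-β` then
`Σ_{n≥2} n² a_n ≤ 4(1-β)/(2α+2-β)`. -/
theorem stmt_18 (α β : ℝ) (hα0 : 0 < α) (hα1 : α ≤ 1) (hβ0 : 2 * (1 - α) ≤ β)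
    (hβ1 : β < 1) (a : ℕ → ℝ) (han : ∀ n, 0 ≤ a n)
    (hsum : Summable fun n : ℕ =>
      (α * ((n : ℝ) + 2) ^ 2 + (1 - α) * ((n : ℝ) + 2) - β) * a (n + 2))
    (h : (∑' n : ℕ, (α * ((n : ℝ) + 2) ^ 2 + (1 - α) * ((n : ℝ) + 2) - β) * a (n + 2))
      ≤ 1 - β) :
    (Summable fun n : ℕ => ((n : ℝ) + 2) ^ 2 * a (n + 2)) ∧
      (∑' n : ℕ, ((n : ℝ) + 2) ^ 2 * a (n + 2)) ≤ 4 * (1 - β) / (2 * α + 2 - β) := by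
  have hc : 0 < 2 * α + 2 - β := by linarith
  have hβnn : 0 ≤ β := by linarith
  have key : ∀ m : ℕ, ((m : ℝ) + 2) ^ 2 * a (m + 2) ≤
      (4 / (2 * α + 2 - β)) *
      ((α * ((m : ℝ) + 2) ^ 2 + (1 - α) * ((m : ℝ) + 2) - β) * a (m + 2)) := by
    intro m
    have hm : (0 : ℝ) ≤ (m : ℝ) := Nat.cast_nonneg m
    rw [div_mul_eq_mul_div, le_div_iff₀ hc]
    have hineq : ((m : ℝ) + 2) ^ 2 * (2 * α + 2 - β) ≤
        4 * (α * ((m : ℝ) + 2) ^ 2 + (1 - α) * ((m : ℝ) + 2) - β) := by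
      nlinarith [sq_nonneg ((m : ℝ)), mul_nonneg hm hβnn, mul_nonneg (mul_nonneg hm hm) (by linarith : (0:ℝ) ≤ β - 2*(1-α))]
    calc ((m : ℝ) + 2) ^ 2 * a (m + 2) * (2 * α + 2 - β)
        = (((m : ℝ) + 2) ^ 2 * (2 * α + 2 - β)) * a (m + 2) := by ring
      _ ≤ (4 * (α * ((m : ℝ) + 2) ^ 2 + (1 - α) * ((m : ℝ) + 2) - β)) * a (m + 2) :=
          mul_le_mul_of_nonneg_right hineq (han _)
      _ = 4 * ((α * ((m : ℝ) + 2) ^ 2 + (1 - α) * ((m : ℝ) + 2) - β) * a (m + 2)) := by ring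
  have hnn : ∀ m : ℕ, 0 ≤ ((m : ℝ) + 2) ^ 2 * a (m + 2) := fun m =>
    mul_nonneg (sq_nonneg _) (han _)
  have hsum2 : Summable fun n : ℕ => ((n : ℝ) + 2) ^ 2 * a (n + 2) :=
    Summable.of_nonneg_of_le hnn key (hsum.mul_left _)
  refine ⟨hsum2, ?_⟩
  calc (∑' n : ℕ, ((n : ℝ) + 2) ^ 2 * a (n + 2))
      ≤ ∑' n : ℕ, (4 / (2 * α + 2 - β)) *
        ((α * ((n : ℝ) + 2) ^ 2 + (1 - α) * ((n : ℝ) + 2) - β) * a (n + 2)) :=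
        Summable.tsum_le_tsum key hsum2 (hsum.mul_left _)
    _ = (4 / (2 * α + 2 - β)) *
        ∑' n : ℕ, (α * ((n : ℝ) + 2) ^ 2 + (1 - α) * ((n : ℝ) + 2) - β) * a (n + 2) :=
        tsum_mul_left
    _ ≤ (4 / (2 * α + 2 - β)) * (1 - β) := by
        exact mul_le_mul_of_nonneg_left h (by positivity)
    _ = 4 * (1 - β) / (2 * α + 2 - β) := by ring
end
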